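/- arXiv:1308.4584 — 6 statements merged into one kernel-verified Lean document; each statement's English description precedes it below -/
import Mathlib

section
/- Let u, V, g be complex-valued functions of a real variable λ, with u and g differentiable at λ₀, and suppose V(λ₀)² ≠ g(λ₀)² and that g satisfies the quadrant Löwner equation at λ₀: g′(λ₀) = ( g(λ₀) / (V(λ₀)² − g(λ₀)²) ) · u′(λ₀). Define g̃ := g² + 2u and U := V² + 2u (so U(λ₀) − g̃(λ₀) = V(λ₀)² − g(λ₀)² ≠ 0). Then g̃ is differentiable at λ₀ and satisfies g̃′(λ₀) = ( 2 V(λ₀)² / (U(λ₀) − g̃(λ₀)) ) · u′(λ₀). -/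
/-- (Proposition 5.1(i), computational content.)  If `g` satisfies the
quadrant Löwner equation `g′ = g/(V² − g²)·u′` at `l₀` with `V(l₀)² ≠ g(l₀)²`, then
`g̃ := g² + 2u` is differentiable at `l₀` and satisfies the chordal Löwner equation
`g̃′ = 2V²/(U − g̃)·u′` with `U := V² + 2u`. -/
theorem quadrant_to_chordal_loewner (u V g : ℝ → ℂ) (l₀ : ℝ)
    (hu : DifferentiableAt ℝ u l₀) (hg : DifferentiableAt ℝ g l₀)
    (hne : V l₀ ^ 2 ≠ g l₀ ^ 2)
    (hql : deriv g l₀ = g l₀ / (V l₀ ^ 2 - g l₀ ^ 2) * deriv u l₀) :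
    DifferentiableAt ℝ (fun l => g l ^ 2 + 2 * u l) l₀ ∧
    deriv (fun l => g l ^ 2 + 2 * u l) l₀ =
      2 * V l₀ ^ 2 / ((V l₀ ^ 2 + 2 * u l₀) - (g l₀ ^ 2 + 2 * u l₀)) * deriv u l₀ := by
  have hdiff : DifferentiableAt ℝ (fun l => g l ^ 2 + 2 * u l) l₀ :=
    (hg.pow 2).add (hu.const_mul 2)
  refine ⟨hdiff, ?_⟩
  have h1 : deriv (fun l => g l ^ 2 + 2 * u l) l₀
      = 2 * g l₀ * deriv g l₀ + 2 * deriv u l₀ := by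
    have hp : HasDerivAt (fun l => g l ^ 2) (2 * g l₀ * deriv g l₀) l₀ := by
      have h := hg.hasDerivAt.fun_mul hg.hasDerivAt
      simp only [pow_two]
      refine h.congr_deriv ?_
      ring
    rw [deriv_fun_add (hg.fun_pow 2) (hu.const_mul 2), hp.deriv, deriv_const_mul 2 hu]
  have hsub : V l₀ ^ 2 - g l₀ ^ 2 ≠ 0 := sub_ne_zero.mpr hne
  rw [h1, hql]
  have : (V l₀ ^ 2 + 2 * u l₀) - (g l₀ ^ 2 + 2 * u l₀) = V l₀ ^ 2 - g l₀ ^ 2 := by ring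
  rw [this]
  field_simp
  ring
end

section
/- Let ũ, U, V, g̃ be complex-valued functions of a real variable λ, differentiable at λ₀ (with V⁴ = (V²)² differentiable at λ₀), such that g̃(λ₀) ≠ U(λ₀), g̃ satisfies the chordal Löwner equation at λ₀: g̃′(λ₀) = ũ′(λ₀) / (g̃(λ₀) − U(λ₀)), and V satisfies the ordinary differential equation (d/dλ)(V⁴)(λ₀) − 2 U′(λ₀) V(λ₀)² = 2 ũ′(λ₀). Define u := (U − V²)/2 and q := g̃ − 2u (so V(λ₀)² − q(λ₀) = U(λ₀) − g̃(λ₀) ≠ 0). Then q is differentiable at λ₀ and satisfies q′(λ₀) = ( 2 q(λ₀) / (V(λ₀)² − q(λ₀)) ) · u′(λ₀); that is, q = g² satisfies the squared form of the quadrant Löwner equation with driving function V and datum u. -/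
/-- (Proposition 5.1(ii), computational content.)  Let `ut = ũ`, `U`, `V`,
`gt = g̃` be differentiable at `l₀` with `g̃(l₀) ≠ U(l₀)`, suppose `g̃` satisfies the chordal
Löwner equation `g̃′ = ũ′/(g̃ − U)` at `l₀`, and suppose `V` satisfies the ODE
`(V⁴)′ − 2U′V² = 2ũ′` at `l₀`.  Define `u := (U − V²)/2` and `q := g̃ − 2u = g̃ − (U − V²)`.
Then `q` is differentiable at `l₀` and satisfies the squared quadrant Löwner equation
`q′ = 2q/(V² − q)·u′`. -/
theorem chordal_to_quadrant_loewner (ut U V gt : ℝ → ℂ) (l₀ : ℝ)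
    (hut : DifferentiableAt ℝ ut l₀) (hU : DifferentiableAt ℝ U l₀)
    (hV : DifferentiableAt ℝ V l₀) (hgt : DifferentiableAt ℝ gt l₀)
    (hne : gt l₀ ≠ U l₀)
    (hcl : deriv gt l₀ = deriv ut l₀ / (gt l₀ - U l₀))
    (hode : deriv (fun l => V l ^ 4) l₀ - 2 * deriv U l₀ * V l₀ ^ 2 = 2 * deriv ut l₀) :
    DifferentiableAt ℝ (fun l => gt l - (U l - V l ^ 2)) l₀ ∧
    deriv (fun l => gt l - (U l - V l ^ 2)) l₀ =
      2 * (gt l₀ - (U l₀ - V l₀ ^ 2)) / (V l₀ ^ 2 - (gt l₀ - (U l₀ - V l₀ ^ 2))) *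
        deriv (fun l => (U l - V l ^ 2) / 2) l₀ := by
  have hV2 : HasDerivAt (fun l => V l ^ 2) (2 * V l₀ * deriv V l₀) l₀ := by
    have h := hV.hasDerivAt.fun_mul hV.hasDerivAt
    simp only [← pow_two] at h
    exact h.congr_deriv (by ring)
  have hV4 : HasDerivAt (fun l => V l ^ 4) (4 * V l₀ ^ 3 * deriv V l₀) l₀ := by
    have h := hV2.fun_mul hV2
    have e : (fun l => V l ^ 2 * V l ^ 2) = fun l => V l ^ 4 := by
      funext l; ring
    rw [e] at h
    exact h.congr_deriv (by ring)
  have hUsub : HasDerivAt (fun l => U l - V l ^ 2) (deriv U l₀ - 2 * V l₀ * deriv V l₀) l₀ :=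
    hU.hasDerivAt.sub hV2
  have hq : HasDerivAt (fun l => gt l - (U l - V l ^ 2))
      (deriv gt l₀ - (deriv U l₀ - 2 * V l₀ * deriv V l₀)) l₀ :=
    hgt.hasDerivAt.sub hUsub
  have hu : HasDerivAt (fun l => (U l - V l ^ 2) / 2)
      ((deriv U l₀ - 2 * V l₀ * deriv V l₀) / 2) l₀ := hUsub.div_const 2
  have hV4' : deriv (fun l => V l ^ 4) l₀ = 4 * V l₀ ^ 3 * deriv V l₀ := hV4.deriv
  rw [hV4'] at hode
  have hne' : gt l₀ - U l₀ ≠ 0 := sub_ne_zero.mpr hne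
  have hne'' : V l₀ ^ 2 - (gt l₀ - (U l₀ - V l₀ ^ 2)) ≠ 0 := by
    intro h
    apply hne'
    linear_combination -h
  refine ⟨hq.differentiableAt, ?_⟩
  rw [hq.deriv, hu.deriv, hcl]
  field_simp
  ring_nf
  ring_nf at hode
  linear_combination ((gt l₀ - U l₀) / 2) * hode
end

section
/- Let Ω ⊆ ℝ² be open with coordinates (λ₁, λ₂), and let u, W₁, W₂ : Ω → ℝ be twice continuously differentiable with W₁ ≠ W₂ everywhere on Ω, satisfying the Gibbons–Tsarev system: ∂W₁/∂λ₂ = (2W₁/(W₂ − W₁)) ∂u/∂λ₂, ∂W₂/∂λ₁ = (2W₂/(W₁ − W₂)) ∂u/∂λ₁, and ∂²u/∂λ₁∂λ₂ = (2(W₁ + W₂)/(W₁ − W₂)²) (∂u/∂λ₁)(∂u/∂λ₂). For i = 1, 2 define the first-order operator A_i acting on twice continuously differentiable functions f(w, λ₁, λ₂) (w real) by A_i f := −( w/(W_i − w²) ) (∂u/∂λ_i) (∂f/∂w). Then at every point (w, λ₁, λ₂) with w² ≠ W₁(λ₁,λ₂) and w² ≠ W₂(λ₁,λ₂), the operators ∂/∂λ₁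 − A₁ and ∂/∂λ₂ − A₂ commute: (∂_{λ₁} − A₁)((∂_{λ₂} − A₂)f) = (∂_{λ₂} − A₂)((∂_{λ₁} − A₁)f) for every twice continuously differentiable f. -/
open ContinuousLinearMap

section helpers

/-- slice derivative in first coordinate of ℝ³ -/
lemma hasDerivAt_sliceW (G : ℝ × ℝ × ℝ → ℝ) (p : ℝ × ℝ × ℝ)
    (h : DifferentiableAt ℝ G p) :
    HasDerivAt (fun w => G (w, p.2.1, p.2.2)) (fderiv ℝ G p (1, 0, 0)) p.1 := by
  have hm : HasDerivAt (fun w : ℝ => (w, p.2.1, p.2.2)) ((1 : ℝ), (0 : ℝ), (0 : ℝ)) p.1 :=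
    (hasDerivAt_id p.1).prodMk (hasDerivAt_const _ _)
  exact h.hasFDerivAt.comp_hasDerivAt p.1 hm

lemma hasDerivAt_slice1 (G : ℝ × ℝ × ℝ → ℝ) (p : ℝ × ℝ × ℝ)
    (h : DifferentiableAt ℝ G p) :
    HasDerivAt (fun x => G (p.1, x, p.2.2)) (fderiv ℝ G p (0, 1, 0)) p.2.1 := by
  have hm : HasDerivAt (fun x : ℝ => (p.1, x, p.2.2)) ((0 : ℝ), (1 : ℝ), (0 : ℝ)) p.2.1 :=
    (hasDerivAt_const _ _).prodMk ((hasDerivAt_id _).prodMk (hasDerivAt_const _ _))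
  exact h.hasFDerivAt.comp_hasDerivAt p.2.1 hm

lemma hasDerivAt_slice2 (G : ℝ × ℝ × ℝ → ℝ) (p : ℝ × ℝ × ℝ)
    (h : DifferentiableAt ℝ G p) :
    HasDerivAt (fun x => G (p.1, p.2.1, x)) (fderiv ℝ G p (0, 0, 1)) p.2.2 := by
  have hm : HasDerivAt (fun x : ℝ => (p.1, p.2.1, x)) ((0 : ℝ), (0 : ℝ), (1 : ℝ)) p.2.2 :=
    (hasDerivAt_const _ _).prodMk ((hasDerivAt_const _ _).prodMk (hasDerivAt_id _))
  exact h.hasFDerivAt.comp_hasDerivAt p.2.2 hm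

lemma hasDerivAt_slice1' (g : ℝ × ℝ → ℝ) (x : ℝ × ℝ)
    (h : DifferentiableAt ℝ g x) :
    HasDerivAt (fun s => g (s, x.2)) (fderiv ℝ g x (1, 0)) x.1 := by
  have hm : HasDerivAt (fun s : ℝ => (s, x.2)) ((1 : ℝ), (0 : ℝ)) x.1 :=
    (hasDerivAt_id _).prodMk (hasDerivAt_const _ _)
  exact h.hasFDerivAt.comp_hasDerivAt x.1 hm

lemma hasDerivAt_slice2' (g : ℝ × ℝ → ℝ) (x : ℝ × ℝ)
    (h : DifferentiableAt ℝ g x) :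
    HasDerivAt (fun s => g (x.1, s)) (fderiv ℝ g x (0, 1)) x.2 := by
  have hm : HasDerivAt (fun s : ℝ => (x.1, s)) ((0 : ℝ), (1 : ℝ)) x.2 :=
    (hasDerivAt_const _ _).prodMk (hasDerivAt_id _)
  exact h.hasFDerivAt.comp_hasDerivAt x.2 hm

lemma hasFDerivAt_fderiv_apply {E : Type*} [NormedAddCommGroup E] [NormedSpace ℝ E]
    (F : E → ℝ) (p : E) (v : E) (hd : DifferentiableAt ℝ (fderiv ℝ F) p) :
    HasFDerivAt (fun q => fderiv ℝ F q v)
      ((ContinuousLinearMap.apply ℝ ℝ v).comp (fderiv ℝ (fderiv ℝ F) p)) p :=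
  ((ContinuousLinearMap.apply ℝ ℝ v).hasFDerivAt).comp p hd.hasFDerivAt

lemma fderiv_fderiv_symm {E : Type*} [NormedAddCommGroup E] [NormedSpace ℝ E]
    (F : E → ℝ) {p : E} (hF : ContDiffAt ℝ 2 F p) (a b : E) :
    fderiv ℝ (fun q => fderiv ℝ F q b) p a = fderiv ℝ (fun q => fderiv ℝ F q a) p b := by
  have hd : DifferentiableAt ℝ (fderiv ℝ F) p :=
    (hF.fderiv_right (m := 1) (by norm_num)).differentiableAt (by norm_num)
  rw [(hasFDerivAt_fderiv_apply F p b hd).fderiv, (hasFDerivAt_fderiv_apply F p a hd).fderiv]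
  simpa using hF.isSymmSndFDerivAt (by simp) a b

end helpers


/-- Partial derivative of `F(w, l₁, l₂)` with respect to the first variable `w`. -/
noncomputable def pderivW (F : ℝ × ℝ × ℝ → ℝ) (p : ℝ × ℝ × ℝ) : ℝ :=
  deriv (fun w => F (w, p.2.1, p.2.2)) p.1

/-- Partial derivative of `F(w, l₁, l₂)` with respect to `l₁`. -/
noncomputable def pderivL1 (F : ℝ × ℝ × ℝ → ℝ) (p : ℝ × ℝ × ℝ) : ℝ :=
  deriv (fun x => F (p.1, x, p.2.2)) p.2.1

/-- Partial derivative of `F(w, l₁, l₂)` with respect to `l₂`. -/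
noncomputable def pderivL2 (F : ℝ × ℝ × ℝ → ℝ) (p : ℝ × ℝ × ℝ) : ℝ :=
  deriv (fun x => F (p.1, p.2.1, x)) p.2.2

/-- Partial derivative of `u(l₁, l₂)` with respect to `l₁`. -/
noncomputable def pderiv1 (F : ℝ × ℝ → ℝ) (x : ℝ × ℝ) : ℝ :=
  deriv (fun s => F (s, x.2)) x.1

/-- Partial derivative of `u(l₁, l₂)` with respect to `l₂`. -/
noncomputable def pderiv2 (F : ℝ × ℝ → ℝ) (x : ℝ × ℝ) : ℝ :=
  deriv (fun s => F (x.1, s)) x.2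

/-- The first-order operator `Aᵢ f = −(w/(Wᵢ − w²))·(∂u/∂λᵢ)·(∂f/∂w)`, where `Wᵢ = Vᵢ²`
is the squared driving function and `ui = ∂u/∂λᵢ`. -/
noncomputable def Aop (Wi : ℝ × ℝ → ℝ) (ui : ℝ × ℝ → ℝ) (F : ℝ × ℝ × ℝ → ℝ)
    (p : ℝ × ℝ × ℝ) : ℝ :=
  -(p.1 / (Wi p.2 - p.1 ^ 2)) * ui p.2 * pderivW F p

section eqs

lemma pderivW_eq (G : ℝ × ℝ × ℝ → ℝ) (p : ℝ × ℝ × ℝ) (h : DifferentiableAt ℝ G p) :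
    pderivW G p = fderiv ℝ G p (1, 0, 0) := (hasDerivAt_sliceW G p h).deriv

lemma pderivL1_eq (G : ℝ × ℝ × ℝ → ℝ) (p : ℝ × ℝ × ℝ) (h : DifferentiableAt ℝ G p) :
    pderivL1 G p = fderiv ℝ G p (0, 1, 0) := (hasDerivAt_slice1 G p h).deriv

lemma pderivL2_eq (G : ℝ × ℝ × ℝ → ℝ) (p : ℝ × ℝ × ℝ) (h : DifferentiableAt ℝ G p) :
    pderivL2 G p = fderiv ℝ G p (0, 0, 1) := (hasDerivAt_slice2 G p h).deriv

lemma pderiv1_eq (g : ℝ × ℝ → ℝ) (x : ℝ × ℝ) (h : DifferentiableAt ℝ g x) :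
    pderiv1 g x = fderiv ℝ g x (1, 0) := (hasDerivAt_slice1' g x h).deriv

lemma pderiv2_eq (g : ℝ × ℝ → ℝ) (x : ℝ × ℝ) (h : DifferentiableAt ℝ g x) :
    pderiv2 g x = fderiv ℝ g x (0, 1) := (hasDerivAt_slice2' g x h).deriv

/-- `HasDerivAt` versions with `pderiv` values. -/
lemma hasDerivAt_pdW (G : ℝ × ℝ × ℝ → ℝ) (p : ℝ × ℝ × ℝ) (h : DifferentiableAt ℝ G p) :
    HasDerivAt (fun w => G (w, p.2.1, p.2.2)) (pderivW G p) p.1 := by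
  rw [pderivW_eq G p h]; exact hasDerivAt_sliceW G p h

lemma hasDerivAt_pd1 (G : ℝ × ℝ × ℝ → ℝ) (p : ℝ × ℝ × ℝ) (h : DifferentiableAt ℝ G p) :
    HasDerivAt (fun x => G (p.1, x, p.2.2)) (pderivL1 G p) p.2.1 := by
  rw [pderivL1_eq G p h]; exact hasDerivAt_slice1 G p h

lemma hasDerivAt_pd2 (G : ℝ × ℝ × ℝ → ℝ) (p : ℝ × ℝ × ℝ) (h : DifferentiableAt ℝ G p) :
    HasDerivAt (fun x => G (p.1, p.2.1, x)) (pderivL2 G p) p.2.2 := by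
  rw [pderivL2_eq G p h]; exact hasDerivAt_slice2 G p h

lemma hasDerivAt_pd1' (g : ℝ × ℝ → ℝ) (x : ℝ × ℝ) (h : DifferentiableAt ℝ g x) :
    HasDerivAt (fun s => g (s, x.2)) (pderiv1 g x) x.1 := by
  rw [pderiv1_eq g x h]; exact hasDerivAt_slice1' g x h

lemma hasDerivAt_pd2' (g : ℝ × ℝ → ℝ) (x : ℝ × ℝ) (h : DifferentiableAt ℝ g x) :
    HasDerivAt (fun s => g (x.1, s)) (pderiv2 g x) x.2 := by
  rw [pderiv2_eq g x h]; exact hasDerivAt_slice2' g x h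

end eqs

section clairautF

variable (f : ℝ × ℝ × ℝ → ℝ) (hf : ContDiff ℝ 2 f) (p : ℝ × ℝ × ℝ)

lemma pdW_fun (hf : ContDiff ℝ 2 f) :
    pderivW f = fun q => fderiv ℝ f q (1, 0, 0) :=
  funext fun q => pderivW_eq f q ((hf.differentiable (by norm_num)).differentiableAt)

lemma pd1_fun (hf : ContDiff ℝ 2 f) :
    pderivL1 f = fun q => fderiv ℝ f q (0, 1, 0) :=
  funext fun q => pderivL1_eq f q ((hf.differentiable (by norm_num)).differentiableAt)

lemma pd2_fun (hf : ContDiff ℝ 2 f) :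
    pderivL2 f = fun q => fderiv ℝ f q (0, 0, 1) :=
  funext fun q => pderivL2_eq f q ((hf.differentiable (by norm_num)).differentiableAt)

lemma dFderiv (hf : ContDiff ℝ 2 f) (q : ℝ × ℝ × ℝ) :
    DifferentiableAt ℝ (fderiv ℝ f) q :=
  (hf.contDiffAt.fderiv_right (m := 1) (by norm_num)).differentiableAt (by norm_num)

lemma diff_pdW (hf : ContDiff ℝ 2 f) (q : ℝ × ℝ × ℝ) :
    DifferentiableAt ℝ (pderivW f) q := by
  rw [pdW_fun f hf]
  exact (hasFDerivAt_fderiv_apply f q _ (dFderiv f hf q)).differentiableAt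

lemma diff_pd1 (hf : ContDiff ℝ 2 f) (q : ℝ × ℝ × ℝ) :
    DifferentiableAt ℝ (pderivL1 f) q := by
  rw [pd1_fun f hf]
  exact (hasFDerivAt_fderiv_apply f q _ (dFderiv f hf q)).differentiableAt

lemma diff_pd2 (hf : ContDiff ℝ 2 f) (q : ℝ × ℝ × ℝ) :
    DifferentiableAt ℝ (pderivL2 f) q := by
  rw [pd2_fun f hf]
  exact (hasFDerivAt_fderiv_apply f q _ (dFderiv f hf q)).differentiableAt

lemma clairaut_12 (hf : ContDiff ℝ 2 f) :
    pderivL1 (pderivL2 f) p = pderivL2 (pderivL1 f) p := by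
  rw [pd1_fun f hf, pd2_fun f hf,
    pderivL1_eq _ p (hasFDerivAt_fderiv_apply f p _ (dFderiv f hf p)).differentiableAt,
    pderivL2_eq _ p (hasFDerivAt_fderiv_apply f p _ (dFderiv f hf p)).differentiableAt,
    fderiv_fderiv_symm f hf.contDiffAt]

lemma clairaut_1W (hf : ContDiff ℝ 2 f) :
    pderivL1 (pderivW f) p = pderivW (pderivL1 f) p := by
  rw [pd1_fun f hf, pdW_fun f hf,
    pderivL1_eq _ p (hasFDerivAt_fderiv_apply f p _ (dFderiv f hf p)).differentiableAt,
    pderivW_eq _ p (hasFDerivAt_fderiv_apply f p _ (dFderiv f hf p)).differentiableAt,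
    fderiv_fderiv_symm f hf.contDiffAt]

lemma clairaut_2W (hf : ContDiff ℝ 2 f) :
    pderivL2 (pderivW f) p = pderivW (pderivL2 f) p := by
  rw [pd2_fun f hf, pdW_fun f hf,
    pderivL2_eq _ p (hasFDerivAt_fderiv_apply f p _ (dFderiv f hf p)).differentiableAt,
    pderivW_eq _ p (hasFDerivAt_fderiv_apply f p _ (dFderiv f hf p)).differentiableAt,
    fderiv_fderiv_symm f hf.contDiffAt]

end clairautF

section clairautU

open Topology

variable {Ω : Set (ℝ × ℝ)} {x : ℝ × ℝ} {g : ℝ × ℝ → ℝ}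
variable (hΩ : IsOpen Ω) (hx : x ∈ Ω) (hg : ContDiffOn ℝ 2 g Ω)
include hΩ hx hg

lemma ev_pd1 : pderiv1 g =ᶠ[𝓝 x] fun y => fderiv ℝ g y (1, 0) := by
  filter_upwards [hΩ.mem_nhds hx] with y hy
  exact pderiv1_eq g y ((hg.contDiffAt (hΩ.mem_nhds hy)).differentiableAt (by norm_num))

lemma ev_pd2 : pderiv2 g =ᶠ[𝓝 x] fun y => fderiv ℝ g y (0, 1) := by
  filter_upwards [hΩ.mem_nhds hx] with y hy
  exact pderiv2_eq g y ((hg.contDiffAt (hΩ.mem_nhds hy)).differentiableAt (by norm_num))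

lemma dFderiv' : DifferentiableAt ℝ (fderiv ℝ g) x :=
  ((hg.contDiffAt (hΩ.mem_nhds hx)).fderiv_right (m := 1) (by norm_num)).differentiableAt (by norm_num)

lemma diff_pd1' : DifferentiableAt ℝ (pderiv1 g) x :=
  (ev_pd1 hΩ hx hg).differentiableAt_iff.2
    (hasFDerivAt_fderiv_apply g x _ (dFderiv' hΩ hx hg)).differentiableAt

lemma diff_pd2' : DifferentiableAt ℝ (pderiv2 g) x :=
  (ev_pd2 hΩ hx hg).differentiableAt_iff.2
    (hasFDerivAt_fderiv_apply g x _ (dFderiv' hΩ hx hg)).differentiableAt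

lemma clairaut_u : pderiv2 (pderiv1 g) x = pderiv1 (pderiv2 g) x := by
  have hd := dFderiv' hΩ hx hg
  have ht2 : Filter.Tendsto (fun s : ℝ => (x.1, s)) (nhds x.2) (nhds x) :=
    (continuous_const.prodMk continuous_id).tendsto' x.2 x rfl
  have ht1 : Filter.Tendsto (fun s : ℝ => (s, x.2)) (nhds x.1) (nhds x) :=
    (continuous_id.prodMk continuous_const).tendsto' x.1 x rfl
  have h1 : pderiv2 (pderiv1 g) x = pderiv2 (fun y => fderiv ℝ g y (1, 0)) x :=
    ((ev_pd1 hΩ hx hg).comp_tendsto ht2).deriv_eq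
  have h2 : pderiv1 (pderiv2 g) x = pderiv1 (fun y => fderiv ℝ g y (0, 1)) x :=
    ((ev_pd2 hΩ hx hg).comp_tendsto ht1).deriv_eq
  rw [h1, h2,
    pderiv2_eq _ x (hasFDerivAt_fderiv_apply g x _ hd).differentiableAt,
    pderiv1_eq _ x (hasFDerivAt_fderiv_apply g x _ hd).differentiableAt,
    fderiv_fderiv_symm g (hg.contDiffAt (hΩ.mem_nhds hx))]

end clairautU

set_option maxHeartbeats 4000000 in
/-- The Gibbons–Tsarev system is the compatibility condition of the
quadrant Löwner equations: if `u, W₁, W₂` are `C²` on an open `Ω ⊆ ℝ²` with `W₁ ≠ W₂` on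
`Ω` and satisfy the Gibbons–Tsarev system, then at every point `(w, λ₁, λ₂)` with
`λ ∈ Ω`, `w² ≠ W₁(λ)`, `w² ≠ W₂(λ)`, the operators `∂/∂λ₁ − A₁` and `∂/∂λ₂ − A₂` commute
on every `C²` function `f(w, λ₁, λ₂)`. -/
theorem gibbons_tsarev_compatibility
    (Ω : Set (ℝ × ℝ)) (hΩ : IsOpen Ω)
    (u W₁ W₂ : ℝ × ℝ → ℝ)
    (hu : ContDiffOn ℝ 2 u Ω) (hW₁ : ContDiffOn ℝ 2 W₁ Ω) (hW₂ : ContDiffOn ℝ 2 W₂ Ω)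
    (hne : ∀ x ∈ Ω, W₁ x ≠ W₂ x)
    (hgt1 : ∀ x ∈ Ω, pderiv2 W₁ x = 2 * W₁ x / (W₂ x - W₁ x) * pderiv2 u x)
    (hgt2 : ∀ x ∈ Ω, pderiv1 W₂ x = 2 * W₂ x / (W₁ x - W₂ x) * pderiv1 u x)
    (hgt3 : ∀ x ∈ Ω, pderiv1 (pderiv2 u) x =
      2 * (W₁ x + W₂ x) / (W₁ x - W₂ x) ^ 2 * pderiv1 u x * pderiv2 u x)
    (f : ℝ × ℝ × ℝ → ℝ) (hf : ContDiff ℝ 2 f)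
    (p : ℝ × ℝ × ℝ) (hp : p.2 ∈ Ω)
    (hw1 : p.1 ^ 2 ≠ W₁ p.2) (hw2 : p.1 ^ 2 ≠ W₂ p.2) :
    pderivL1 (fun q => pderivL2 f q - Aop W₂ (pderiv2 u) f q) p
      - Aop W₁ (pderiv1 u) (fun q => pderivL2 f q - Aop W₂ (pderiv2 u) f q) p
    = pderivL2 (fun q => pderivL1 f q - Aop W₁ (pderiv1 u) f q) p
      - Aop W₂ (pderiv2 u) (fun q => pderivL1 f q - Aop W₁ (pderiv1 u) f q) p := by

  obtain ⟨w, l1, l2⟩ := p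
  replace hp : (l1, l2) ∈ Ω := hp
  replace hw1 : w ^ 2 ≠ W₁ (l1, l2) := hw1
  replace hw2 : w ^ 2 ≠ W₂ (l1, l2) := hw2
  have hΩn : Ω ∈ nhds (l1, l2) := hΩ.mem_nhds hp
  have ha0 : W₁ (l1, l2) - w ^ 2 ≠ 0 := sub_ne_zero.mpr (Ne.symm hw1)
  have hb0 : W₂ (l1, l2) - w ^ 2 ≠ 0 := sub_ne_zero.mpr (Ne.symm hw2)
  have hd0 : W₁ (l1, l2) - W₂ (l1, l2) ≠ 0 := sub_ne_zero.mpr (hne _ hp)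
  have hd0' : W₂ (l1, l2) - W₁ (l1, l2) ≠ 0 := sub_ne_zero.mpr (Ne.symm (hne _ hp))
  have hW1d : DifferentiableAt ℝ W₁ (l1, l2) := (hW₁.contDiffAt hΩn).differentiableAt (by norm_num)
  have hW2d : DifferentiableAt ℝ W₂ (l1, l2) := (hW₂.contDiffAt hΩn).differentiableAt (by norm_num)
  have hu1d : DifferentiableAt ℝ (pderiv1 u) (l1, l2) := diff_pd1' hΩ hp hu
  have hu2d : DifferentiableAt ℝ (pderiv2 u) (l1, l2) := diff_pd2' hΩ hp hu
  have hW2s : HasDerivAt (fun x => W₂ (x, l2)) (pderiv1 W₂ (l1, l2)) l1 :=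
    hasDerivAt_pd1' W₂ (l1, l2) hW2d
  have hW1s : HasDerivAt (fun y => W₁ (l1, y)) (pderiv2 W₁ (l1, l2)) l2 :=
    hasDerivAt_pd2' W₁ (l1, l2) hW1d
  have hu2s : HasDerivAt (fun x => pderiv2 u (x, l2)) (pderiv1 (pderiv2 u) (l1, l2)) l1 :=
    hasDerivAt_pd1' _ (l1, l2) hu2d
  have hu1s : HasDerivAt (fun y => pderiv1 u (l1, y)) (pderiv2 (pderiv1 u) (l1, l2)) l2 :=
    hasDerivAt_pd2' _ (l1, l2) hu1d
  have hfws1 : HasDerivAt (fun x => pderivW f (w, x, l2))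
      (pderivL1 (pderivW f) (w, l1, l2)) l1 :=
    hasDerivAt_pd1 _ (w, l1, l2) (diff_pdW f hf _)
  have hfws2 : HasDerivAt (fun y => pderivW f (w, l1, y))
      (pderivL2 (pderivW f) (w, l1, l2)) l2 :=
    hasDerivAt_pd2 _ (w, l1, l2) (diff_pdW f hf _)
  have hfwsW : HasDerivAt (fun v => pderivW f (v, l1, l2))
      (pderivW (pderivW f) (w, l1, l2)) w :=
    hasDerivAt_pdW _ (w, l1, l2) (diff_pdW f hf _)
  have hfl2s1 : HasDerivAt (fun x => pderivL2 f (w, x, l2))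
      (pderivL1 (pderivL2 f) (w, l1, l2)) l1 :=
    hasDerivAt_pd1 _ (w, l1, l2) (diff_pd2 f hf _)
  have hfl2sW : HasDerivAt (fun v => pderivL2 f (v, l1, l2))
      (pderivW (pderivL2 f) (w, l1, l2)) w :=
    hasDerivAt_pdW _ (w, l1, l2) (diff_pd2 f hf _)
  have hfl1s2 : HasDerivAt (fun y => pderivL1 f (w, l1, y))
      (pderivL2 (pderivL1 f) (w, l1, l2)) l2 :=
    hasDerivAt_pd2 _ (w, l1, l2) (diff_pd1 f hf _)
  have hfl1sW : HasDerivAt (fun v => pderivL1 f (v, l1, l2))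
      (pderivW (pderivL1 f) (w, l1, l2)) w :=
    hasDerivAt_pdW _ (w, l1, l2) (diff_pd1 f hf _)
  have hpow : HasDerivAt (fun v : ℝ => v ^ 2) (2 * w) w := by
    simpa using hasDerivAt_pow 2 w
  -- λ₁-derivative of the slice of A₂ f
  have hA : HasDerivAt (fun x => Aop W₂ (pderiv2 u) f (w, x, l2))
      ((-((0 * (W₂ (l1, l2) - w ^ 2) - w * pderiv1 W₂ (l1, l2)) / (W₂ (l1, l2) - w ^ 2) ^ 2)
          * pderiv2 u (l1, l2)
        + -(w / (W₂ (l1, l2) - w ^ 2)) * pderiv1 (pderiv2 u) (l1, l2)) * pderivW f (w, l1, l2)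
       + -(w / (W₂ (l1, l2) - w ^ 2)) * pderiv2 u (l1, l2) * pderivL1 (pderivW f) (w, l1, l2)) l1 :=
    (((hasDerivAt_const l1 w).div (hW2s.sub_const (w ^ 2)) hb0).neg.mul hu2s).mul hfws1
  have T1 : pderivL1 (fun q => pderivL2 f q - Aop W₂ (pderiv2 u) f q) (w, l1, l2)
      = pderivL1 (pderivL2 f) (w, l1, l2)
        - ((-((0 * (W₂ (l1, l2) - w ^ 2) - w * pderiv1 W₂ (l1, l2)) / (W₂ (l1, l2) - w ^ 2) ^ 2)
            * pderiv2 u (l1, l2)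
          + -(w / (W₂ (l1, l2) - w ^ 2)) * pderiv1 (pderiv2 u) (l1, l2)) * pderivW f (w, l1, l2)
         + -(w / (W₂ (l1, l2) - w ^ 2)) * pderiv2 u (l1, l2) * pderivL1 (pderivW f) (w, l1, l2)) :=
    (hfl2s1.sub hA).deriv
  -- w-derivative of the slice of A₂ f
  have hAW : HasDerivAt (fun v => Aop W₂ (pderiv2 u) f (v, l1, l2))
      (-((1 * (W₂ (l1, l2) - w ^ 2) - w * (0 - 2 * w)) / (W₂ (l1, l2) - w ^ 2) ^ 2)
          * pderiv2 u (l1, l2) * pderivW f (w, l1, l2)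
       + -(w / (W₂ (l1, l2) - w ^ 2)) * pderiv2 u (l1, l2)
          * pderivW (pderivW f) (w, l1, l2)) w :=
    by
      have step := ((hasDerivAt_id w).div ((hasDerivAt_const w (W₂ (l1, l2))).sub hpow) hb0).neg
      exact (step.mul_const (pderiv2 u (l1, l2))).mul hfwsW
  have T2 : pderivW (fun q => pderivL2 f q - Aop W₂ (pderiv2 u) f q) (w, l1, l2)
      = pderivW (pderivL2 f) (w, l1, l2)
        - (-((1 * (W₂ (l1, l2) - w ^ 2) - w * (0 - 2 * w)) / (W₂ (l1, l2) - w ^ 2) ^ 2)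
            * pderiv2 u (l1, l2) * pderivW f (w, l1, l2)
           + -(w / (W₂ (l1, l2) - w ^ 2)) * pderiv2 u (l1, l2)
              * pderivW (pderivW f) (w, l1, l2)) :=
    (hfl2sW.sub hAW).deriv
  -- λ₂-derivative of the slice of A₁ f
  have hB : HasDerivAt (fun y => Aop W₁ (pderiv1 u) f (w, l1, y))
      ((-((0 * (W₁ (l1, l2) - w ^ 2) - w * pderiv2 W₁ (l1, l2)) / (W₁ (l1, l2) - w ^ 2) ^ 2)
          * pderiv1 u (l1, l2)
        + -(w / (W₁ (l1, l2) - w ^ 2)) * pderiv2 (pderiv1 u) (l1, l2)) * pderivW f (w, l1, l2)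
       + -(w / (W₁ (l1, l2) - w ^ 2)) * pderiv1 u (l1, l2) * pderivL2 (pderivW f) (w, l1, l2)) l2 :=
    (((hasDerivAt_const l2 w).div (hW1s.sub_const (w ^ 2)) ha0).neg.mul hu1s).mul hfws2
  have T3 : pderivL2 (fun q => pderivL1 f q - Aop W₁ (pderiv1 u) f q) (w, l1, l2)
      = pderivL2 (pderivL1 f) (w, l1, l2)
        - ((-((0 * (W₁ (l1, l2) - w ^ 2) - w * pderiv2 W₁ (l1, l2)) / (W₁ (l1, l2) - w ^ 2) ^ 2)
            * pderiv1 u (l1, l2)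
          + -(w / (W₁ (l1, l2) - w ^ 2)) * pderiv2 (pderiv1 u) (l1, l2)) * pderivW f (w, l1, l2)
         + -(w / (W₁ (l1, l2) - w ^ 2)) * pderiv1 u (l1, l2) * pderivL2 (pderivW f) (w, l1, l2)) :=
    (hfl1s2.sub hB).deriv
  -- w-derivative of the slice of A₁ f
  have hBW : HasDerivAt (fun v => Aop W₁ (pderiv1 u) f (v, l1, l2))
      (-((1 * (W₁ (l1, l2) - w ^ 2) - w * (0 - 2 * w)) / (W₁ (l1, l2) - w ^ 2) ^ 2)
          * pderiv1 u (l1, l2) * pderivW f (w, l1, l2)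
       + -(w / (W₁ (l1, l2) - w ^ 2)) * pderiv1 u (l1, l2)
          * pderivW (pderivW f) (w, l1, l2)) w :=
    by
      have step := ((hasDerivAt_id w).div ((hasDerivAt_const w (W₁ (l1, l2))).sub hpow) ha0).neg
      exact (step.mul_const (pderiv1 u (l1, l2))).mul hfwsW
  have T4 : pderivW (fun q => pderivL1 f q - Aop W₁ (pderiv1 u) f q) (w, l1, l2)
      = pderivW (pderivL1 f) (w, l1, l2)
        - (-((1 * (W₁ (l1, l2) - w ^ 2) - w * (0 - 2 * w)) / (W₁ (l1, l2) - w ^ 2) ^ 2)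
            * pderiv1 u (l1, l2) * pderivW f (w, l1, l2)
           + -(w / (W₁ (l1, l2) - w ^ 2)) * pderiv1 u (l1, l2)
              * pderivW (pderivW f) (w, l1, l2)) :=
    (hfl1sW.sub hBW).deriv
  have hOut1 : Aop W₁ (pderiv1 u) (fun q => pderivL2 f q - Aop W₂ (pderiv2 u) f q) (w, l1, l2)
      = -(w / (W₁ (l1, l2) - w ^ 2)) * pderiv1 u (l1, l2)
        * pderivW (fun q => pderivL2 f q - Aop W₂ (pderiv2 u) f q) (w, l1, l2) := rfl
  have hOut2 : Aop W₂ (pderiv2 u) (fun q => pderivL1 f q - Aop W₁ (pderiv1 u) f q) (w, l1, l2)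
      = -(w / (W₂ (l1, l2) - w ^ 2)) * pderiv2 u (l1, l2)
        * pderivW (fun q => pderivL1 f q - Aop W₁ (pderiv1 u) f q) (w, l1, l2) := rfl
  rw [hOut1, hOut2, T1, T2, T3, T4,
    clairaut_12 f (w, l1, l2) hf, clairaut_1W f (w, l1, l2) hf, clairaut_2W f (w, l1, l2) hf,
    clairaut_u hΩ hp hu, hgt1 _ hp, hgt2 _ hp, hgt3 _ hp]
  field_simp
  ring
end

section
/- Let g, W_i, W_j, u be real-valued functions of a real variable s, differentiable at s₀, with g(s₀)² ≠ W_i(s₀), g(s₀)² ≠ W_j(s₀), and W_i(s₀) ≠ W_j(s₀). Suppose g satisfies the quadrant Löwner equation g′(s₀) = ( g(s₀)/(W_j(s₀) − g(s₀)²) ) u′(s₀) and W_i satisfies the Gibbons–Tsarev equation W_i′(s₀) = ( 2W_i(s₀)/(W_j(s₀) − W_i(s₀)) ) u′(s₀). Then the function s ↦ g(s)/(g(s)² − W_i(s)) is differentiable at s₀ with derivative ( g(s₀) / ( (g(s₀)² − W_j(s₀))(g(s₀)² − W_i(s₀)) ) ) · ( (W_i(s₀) + W_j(s₀)) / (W_j(s₀)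 − W_i(s₀)) ) · u′(s₀). -/
/-- (Generating-function form of `∂χ_{i,n}/∂λ_j = Γ_ij(χ_{j,n} − χ_{i,n})`.)
Let `g, Wi, Wj, u` be real functions of a real variable `s`, differentiable at `s₀`, with
`g(s₀)² ≠ Wi(s₀)`, `g(s₀)² ≠ Wj(s₀)`, `Wi(s₀) ≠ Wj(s₀)`.  Suppose the quadrant Löwner
equation `g′ = (g/(Wj − g²))·u′` and the Gibbons–Tsarev equation
`Wi′ = (2Wi/(Wj − Wi))·u′` hold at `s₀`.  Then `s ↦ g/(g² − Wi)` is differentiable at `s₀`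
with derivative `(g/((g² − Wj)(g² − Wi)))·((Wi + Wj)/(Wj − Wi))·u′(s₀)`. -/
theorem chi_generating_function_derivative (g Wi Wj u : ℝ → ℝ) (s₀ : ℝ)
    (hg : DifferentiableAt ℝ g s₀) (hWi : DifferentiableAt ℝ Wi s₀)
    (hWj : DifferentiableAt ℝ Wj s₀) (hu : DifferentiableAt ℝ u s₀)
    (h1 : g s₀ ^ 2 ≠ Wi s₀) (h2 : g s₀ ^ 2 ≠ Wj s₀) (h3 : Wi s₀ ≠ Wj s₀)
    (hql : deriv g s₀ = g s₀ / (Wj s₀ - g s₀ ^ 2) * deriv u s₀)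
    (hgt : deriv Wi s₀ = 2 * Wi s₀ / (Wj s₀ - Wi s₀) * deriv u s₀) :
    DifferentiableAt ℝ (fun s => g s / (g s ^ 2 - Wi s)) s₀ ∧
    deriv (fun s => g s / (g s ^ 2 - Wi s)) s₀ =
      g s₀ / ((g s₀ ^ 2 - Wj s₀) * (g s₀ ^ 2 - Wi s₀)) *
        ((Wi s₀ + Wj s₀) / (Wj s₀ - Wi s₀)) * deriv u s₀ := by
  have hden : g s₀ ^ 2 - Wi s₀ ≠ 0 := sub_ne_zero.mpr h1
  have hdenj : g s₀ ^ 2 - Wj s₀ ≠ 0 := sub_ne_zero.mpr h2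
  have hji : Wj s₀ - Wi s₀ ≠ 0 := sub_ne_zero.mpr (Ne.symm h3)
  have hjg : Wj s₀ - g s₀ ^ 2 ≠ 0 := fun h => hdenj (by linarith [sub_eq_zero.mp h])
  have hd : DifferentiableAt ℝ (fun s => g s ^ 2 - Wi s) s₀ := (hg.pow 2).sub hWi
  have hdiff : DifferentiableAt ℝ (fun s => g s / (g s ^ 2 - Wi s)) s₀ := hg.div hd hden
  refine ⟨hdiff, ?_⟩
  rw [deriv_fun_div hg hd hden]
  have hd' : deriv (fun s => g s ^ 2 - Wi s) s₀ = 2 * g s₀ * deriv g s₀ - deriv Wi s₀ := by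
    rw [deriv_fun_sub (f := fun s => g s ^ 2) (hg.pow 2) hWi, deriv_fun_pow hg 2]
    ring
  rw [hd', hql, hgt]
  field_simp
  ring
end

section
/- Let N, K be positive integers, Ω ⊆ ℝ^N open, Γ_ij : Ω → ℝ (i ≠ j) arbitrary functions, R_i : Ω → ℝ differentiable with ∂R_i/∂λ_j = Γ_ij (R_j − R_i) for i ≠ j, and χ_{i,k} : Ω → ℝ (1 ≤ i ≤ N, 1 ≤ k ≤ K) differentiable with ∂χ_{i,k}/∂λ_j = Γ_ij (χ_{j,k} − χ_{i,k}) for i ≠ j and all k, and with χ_{i,1} ≡ 1 for every i. Let U ⊆ ℝ^K be open and λ : U → Ω be differentiable at t₀ ∈ U and satisfy the hodograph relations Σ_{k=1}^K χ_{i,k}(λ(t)) t_k = R_i(λ(t)) for all t ∈ U and all i. Then for every i and every k, ∂λ_i/∂t_k (t₀) = χ_{i,k}(λ(t₀)) · ∂λ_i/∂t_1 (t₀). (In the application, t_1 = x is the first time of the dispersionless BKP hierarchy and the λ_i so obtained give an N-variable diagonal reduction.) -/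
/-- Partial derivative of `F : ℝ^N → ℝ` in the `i`-th coordinate direction at `x`. -/
noncomputable def pd {N : ℕ} (i : Fin N) (F : (Fin N → ℝ) → ℝ) (x : Fin N → ℝ) : ℝ :=
  deriv (fun s : ℝ => F (Function.update x i s)) (x i)

lemma pd_eq_fderiv {n : ℕ} (i : Fin n) (F : (Fin n → ℝ) → ℝ) (x : Fin n → ℝ)
    (hF : DifferentiableAt ℝ F x) :
    pd i F x = fderiv ℝ F x (Pi.single i 1) := by
  have hF' : HasFDerivAt F (fderiv ℝ F x) (Function.update x i (x i)) := by
    rw [Function.update_eq_self]; exact hF.hasFDerivAt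
  have h : HasDerivAt (fun s : ℝ => F (Function.update x i s))
      (fderiv ℝ F x (Pi.single i 1)) (x i) :=
    hF'.comp_hasDerivAt (x i) (hasDerivAt_update x i (x i))
  exact h.deriv

lemma fderiv_apply_eq_sum {n : ℕ} (F : (Fin n → ℝ) → ℝ) (x v : Fin n → ℝ)
    (hF : DifferentiableAt ℝ F x) :
    fderiv ℝ F x v = ∑ j, v j * pd j F x := by
  have hv : v = ∑ j, v j • (Pi.single j (1 : ℝ) : Fin n → ℝ) := by
    funext m
    simp [Finset.sum_apply, Pi.single_apply]
  conv_lhs => rw [hv]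
  rw [map_sum]
  refine Finset.sum_congr rfl fun j _ => ?_
  rw [map_smul, pd_eq_fderiv j F x hF]
  simp [smul_eq_mul, mul_comm]

/-- (Part (ii) of the generalized hodograph lemma, finitely many times.)
Suppose `R_i` and the `χ_{i,k}` satisfy the same linear system `∂F_i/∂λ_j = Γ_ij(F_j − F_i)`
(`i ≠ j`) on an open `Ω ⊆ ℝ^N`, with `χ_{i,1} ≡ 1` (here the index `⟨0, hK⟩ : Fin K` plays
the role of the first time `t₁ = x`).  If `lam : U → Ω` is differentiable at `t₀ ∈ U` and
satisfies the hodograph relations `Σ_k χ_{i,k}(lam(t))·t_k = R_i(lam(t))` on the open set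
`U`, then `∂λ_i/∂t_k(t₀) = χ_{i,k}(lam(t₀))·∂λ_i/∂t₁(t₀)` for every `i` and `k`. -/
theorem hodograph_diagonal_reduction {N K : ℕ} (hN : 0 < N) (hK : 0 < K)
    (Ω : Set (Fin N → ℝ)) (hΩ : IsOpen Ω)
    (Γ : Fin N → Fin N → (Fin N → ℝ) → ℝ)
    (R : Fin N → (Fin N → ℝ) → ℝ) (χ : Fin N → Fin K → (Fin N → ℝ) → ℝ)
    (hR : ∀ i, DifferentiableOn ℝ (R i) Ω)
    (hχ : ∀ i k, DifferentiableOn ℝ (χ i k) Ω)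
    (hReq : ∀ i j : Fin N, i ≠ j → ∀ x ∈ Ω,
      pd j (R i) x = Γ i j x * (R j x - R i x))
    (hχeq : ∀ i j : Fin N, i ≠ j → ∀ k : Fin K, ∀ x ∈ Ω,
      pd j (χ i k) x = Γ i j x * (χ j k x - χ i k x))
    (hχ1 : ∀ i : Fin N, ∀ x ∈ Ω, χ i ⟨0, hK⟩ x = 1)
    (U : Set (Fin K → ℝ)) (hU : IsOpen U)
    (lam : (Fin K → ℝ) → (Fin N → ℝ)) (hmap : ∀ t ∈ U, lam t ∈ Ω)
    (t₀ : Fin K → ℝ) (ht₀ : t₀ ∈ U) (hdiff : DifferentiableAt ℝ lam t₀)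
    (hodo : ∀ t ∈ U, ∀ i : Fin N, ∑ k, χ i k (lam t) * t k = R i (lam t)) :
    ∀ (i : Fin N) (k : Fin K),
      pd k (fun t => lam t i) t₀ =
        χ i k (lam t₀) * pd (⟨0, hK⟩ : Fin K) (fun t => lam t i) t₀ := by
  intro i k
  set x₀ := lam t₀ with hx₀def
  have hx₀ : x₀ ∈ Ω := hmap t₀ ht₀
  have hΩnhds : Ω ∈ nhds x₀ := hΩ.mem_nhds hx₀
  have hRd : DifferentiableAt ℝ (R i) x₀ := (hR i).differentiableAt hΩnhds
  have hχd : ∀ m : Fin K, DifferentiableAt ℝ (χ i m) x₀ :=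
    fun m => (hχ i m).differentiableAt hΩnhds
  set L := fderiv ℝ lam t₀ with hLdef
  -- the directional derivatives of lam
  set v : Fin K → (Fin N → ℝ) := fun m => L (Pi.single m 1) with hvdef
  -- partial derivative of λ_i equals component of v
  have hcomp : ∀ m : Fin K, pd m (fun t => lam t i) t₀ = v m i := by
    intro m
    have h1 : HasFDerivAt (fun t => lam t i)
        ((ContinuousLinearMap.proj i : (Fin N → ℝ) →L[ℝ] ℝ).comp L) t₀ :=
      (ContinuousLinearMap.proj i : (Fin N → ℝ) →L[ℝ] ℝ).hasFDerivAt.comp t₀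
        hdiff.hasFDerivAt
    rw [pd_eq_fderiv m _ t₀ h1.differentiableAt, h1.fderiv]
    rfl
  -- the key scalar equation from differentiating the hodograph relation
  have key : ∀ m : Fin K,
      χ i m x₀ + v m i *
        ((∑ l, t₀ l * pd i (χ i l) x₀) - pd i (R i) x₀) = 0 := by
    intro m
    -- G vanishes on U
    set G : (Fin K → ℝ) → ℝ := fun t => (∑ l, χ i l (lam t) * t l) - R i (lam t) with hGdef
    have hG0 : ∀ t ∈ U, G t = 0 := by
      intro t ht; simp [hGdef, hodo t ht i]
    have hDl : ∀ l : Fin K, HasFDerivAt (fun t => χ i l (lam t) * t l)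
        ((χ i l x₀) • (ContinuousLinearMap.proj l : (Fin K → ℝ) →L[ℝ] ℝ)
          + (t₀ l) • ((fderiv ℝ (χ i l) x₀).comp L)) t₀ := by
      intro l
      have h1 : HasFDerivAt (fun t => χ i l (lam t))
          ((fderiv ℝ (χ i l) x₀).comp L) t₀ :=
        (hχd l).hasFDerivAt.comp t₀ hdiff.hasFDerivAt
      have h2 : HasFDerivAt (fun t : Fin K → ℝ => t l)
          (ContinuousLinearMap.proj l : (Fin K → ℝ) →L[ℝ] ℝ) t₀ :=
        (ContinuousLinearMap.proj l : (Fin K → ℝ) →L[ℝ] ℝ).hasFDerivAt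
      exact h1.mul h2
    have hGderiv : HasFDerivAt G
        ((∑ l, ((χ i l x₀) • (ContinuousLinearMap.proj l : (Fin K → ℝ) →L[ℝ] ℝ)
          + (t₀ l) • ((fderiv ℝ (χ i l) x₀).comp L)))
          - (fderiv ℝ (R i) x₀).comp L) t₀ := by
      exact (HasFDerivAt.fun_sum (fun l _ => hDl l)).sub
        (hRd.hasFDerivAt.comp t₀ hdiff.hasFDerivAt)
    have hGzero : fderiv ℝ G t₀ = 0 := by
      have hEq : G =ᶠ[nhds t₀] fun _ => (0 : ℝ) :=
        Filter.eventuallyEq_of_mem (hU.mem_nhds ht₀) hG0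
    -- fderiv of a locally zero function
      rw [hEq.fderiv_eq]; exact fderiv_const_apply 0
    have h0 : ((∑ l, ((χ i l x₀) • (ContinuousLinearMap.proj l : (Fin K → ℝ) →L[ℝ] ℝ)
          + (t₀ l) • ((fderiv ℝ (χ i l) x₀).comp L)))
          - (fderiv ℝ (R i) x₀).comp L) (Pi.single m 1) = 0 := by
      rw [← hGderiv.fderiv, hGzero]; rfl
    -- expand the application
    have hexp : (∑ l, (χ i l x₀ * (Pi.single m (1:ℝ) : Fin K → ℝ) l
          + t₀ l * fderiv ℝ (χ i l) x₀ (v m)))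
          - fderiv ℝ (R i) x₀ (v m) = 0 := by
      simpa [ContinuousLinearMap.sum_apply, ContinuousLinearMap.add_apply,
        ContinuousLinearMap.smul_apply, ContinuousLinearMap.sub_apply,
        ContinuousLinearMap.comp_apply, smul_eq_mul, hvdef] using h0
    have hsingle : ∑ l, χ i l x₀ * (Pi.single m (1:ℝ) : Fin K → ℝ) l = χ i m x₀ := by
      rw [Finset.sum_eq_single m]
      · simp
      · intro b _ hb; simp [Pi.single_eq_of_ne hb]
      · simp
    -- rewrite gradients as sums of partials
    have hRgrad : fderiv ℝ (R i) x₀ (v m) = ∑ j, v m j * pd j (R i) x₀ :=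
      fderiv_apply_eq_sum _ _ _ hRd
    have hχgrad : ∀ l, fderiv ℝ (χ i l) x₀ (v m) = ∑ j, v m j * pd j (χ i l) x₀ :=
      fun l => fderiv_apply_eq_sum _ _ _ (hχd l)
    -- off-diagonal terms vanish
    have hoff : ∀ j : Fin N, j ≠ i →
        (∑ l, t₀ l * pd j (χ i l) x₀) - pd j (R i) x₀ = 0 := by
      intro j hj
      have hsum : ∑ l, t₀ l * pd j (χ i l) x₀
          = Γ i j x₀ * ((∑ l, χ j l x₀ * t₀ l) - (∑ l, χ i l x₀ * t₀ l)) := by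
        calc ∑ l, t₀ l * pd j (χ i l) x₀
            = ∑ l, (Γ i j x₀ * (χ j l x₀ * t₀ l) - Γ i j x₀ * (χ i l x₀ * t₀ l)) := by
              refine Finset.sum_congr rfl fun l _ => ?_
              rw [hχeq i j (Ne.symm hj) l x₀ hx₀]; ring
          _ = Γ i j x₀ * ((∑ l, χ j l x₀ * t₀ l) - (∑ l, χ i l x₀ * t₀ l)) := by
              rw [Finset.sum_sub_distrib, ← Finset.mul_sum, ← Finset.mul_sum, mul_sub]
      rw [hsum, hReq i j (Ne.symm hj) x₀ hx₀, hodo t₀ ht₀ i, hodo t₀ ht₀ j]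
      ring
    have hmain : 0 = χ i m x₀ +
        ∑ j, v m j * ((∑ l, t₀ l * pd j (χ i l) x₀) - pd j (R i) x₀) := by
      rw [← hexp, Finset.sum_add_distrib, hsingle, hRgrad]
      have : ∑ l, t₀ l * fderiv ℝ (χ i l) x₀ (v m)
          = ∑ j, v m j * ∑ l, t₀ l * pd j (χ i l) x₀ := by
        simp_rw [hχgrad, Finset.mul_sum]
        rw [Finset.sum_comm]
        refine Finset.sum_congr rfl fun j _ => ?_
        exact Finset.sum_congr rfl fun l _ => by ring
      rw [this]
      simp_rw [mul_sub]
      rw [Finset.sum_sub_distrib]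
      ring
    have hdiag : ∑ j, v m j * ((∑ l, t₀ l * pd j (χ i l) x₀) - pd j (R i) x₀)
        = v m i * ((∑ l, t₀ l * pd i (χ i l) x₀) - pd i (R i) x₀) := by
      rw [Finset.sum_eq_single i]
      · intro b _ hb; rw [hoff b hb]; ring
      · intro h; exact absurd (Finset.mem_univ i) h
    rw [hdiag] at hmain
    linarith
  -- conclude
  set k₀ : Fin K := ⟨0, hK⟩ with hk₀def
  set A : ℝ := pd i (R i) x₀ - ∑ l, t₀ l * pd i (χ i l) x₀ with hAdef
  have hk : χ i k x₀ = A * v k i := by have := key k; rw [hAdef]; linarith [key k]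
  have h1 : (1 : ℝ) = A * v k₀ i := by
    have := key k₀
    rw [hχ1 i x₀ hx₀] at this
    rw [hAdef]; linarith
  rw [hcomp k, hcomp k₀, hk]
  linear_combination v k i * h1
end

section
/- Fix real constants U and c. For real z and real λ with (z² − U)² + 2λ > 0 and 2λ + c > 0, define q(z, λ) := √((z² − U)² + 2λ) + √(2λ + c), W(λ) := √(2λ + c), and u(λ) := (U − √(2λ + c))/2 (real positive square roots). Then at every such point with q(z,λ) ≠ W(λ), ∂q/∂λ = ( 2 q / (W − q) ) · du/dλ; that is, q = g² solves the squared form of the quadrant Löwner equation with squared driving function V² = W = √(2λ + c) and datum u. -/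
/-- With `q(z,λ) := √((z² − U)² + 2λ) + √(2λ + c)`, `W(λ) := √(2λ + c)`
and `u(λ) := (U − √(2λ + c))/2`, at every point with `(z² − U)² + 2λ > 0`, `2λ + c > 0`
and `q ≠ W`, one has `∂q/∂λ = (2q/(W − q))·du/dλ`; that is, `q = g²` solves the squared
quadrant Löwner equation with squared driving function `V² = W` and datum `u`. -/
theorem example_quadrant_loewner_solution (U c z l : ℝ)
    (h1 : (z ^ 2 - U) ^ 2 + 2 * l > 0) (h2 : 2 * l + c > 0)
    (h3 : Real.sqrt ((z ^ 2 - U) ^ 2 + 2 * l) + Real.sqrt (2 * l + c)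
            ≠ Real.sqrt (2 * l + c)) :
    deriv (fun l' : ℝ => Real.sqrt ((z ^ 2 - U) ^ 2 + 2 * l') + Real.sqrt (2 * l' + c)) l =
      2 * (Real.sqrt ((z ^ 2 - U) ^ 2 + 2 * l) + Real.sqrt (2 * l + c)) /
          (Real.sqrt (2 * l + c) -
            (Real.sqrt ((z ^ 2 - U) ^ 2 + 2 * l) + Real.sqrt (2 * l + c))) *
        deriv (fun l' : ℝ => (U - Real.sqrt (2 * l' + c)) / 2) l := by
  set a := Real.sqrt ((z ^ 2 - U) ^ 2 + 2 * l) with ha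
  set b := Real.sqrt (2 * l + c) with hb
  have hapos : 0 < a := Real.sqrt_pos.mpr h1
  have hbpos : 0 < b := Real.sqrt_pos.mpr h2
  have hane : a ≠ 0 := by
    intro h; apply h3; rw [h, zero_add]
  have hA : HasDerivAt (fun l' : ℝ => (z ^ 2 - U) ^ 2 + 2 * l') 2 l := by
    exact ((hasDerivAt_const l ((z ^ 2 - U) ^ 2)).add ((hasDerivAt_id l).const_mul 2)).congr_deriv (by simp)
  have hB : HasDerivAt (fun l' : ℝ => 2 * l' + c) 2 l := by
    exact (((hasDerivAt_id l).const_mul 2).add (hasDerivAt_const l c)).congr_deriv (by simp)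
  have hsA : HasDerivAt (fun l' : ℝ => Real.sqrt ((z ^ 2 - U) ^ 2 + 2 * l'))
      (1 / (2 * a) * 2) l := (Real.hasDerivAt_sqrt h1.ne').comp l hA
  have hsB : HasDerivAt (fun l' : ℝ => Real.sqrt (2 * l' + c)) (1 / (2 * b) * 2) l :=
    (Real.hasDerivAt_sqrt h2.ne').comp l hB
  have hu : HasDerivAt (fun l' : ℝ => (U - Real.sqrt (2 * l' + c)) / 2)
      ((0 - 1 / (2 * b) * 2) / 2) l :=
    ((hasDerivAt_const l U).sub hsB).div_const 2
  have hsum : HasDerivAt (fun l' : ℝ => Real.sqrt ((z ^ 2 - U) ^ 2 + 2 * l') + Real.sqrt (2 * l' + c))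
      (1 / (2 * a) * 2 + 1 / (2 * b) * 2) l := hsA.add hsB
  rw [hsum.deriv, hu.deriv]
  have hab : b - (a + b) ≠ 0 := by
    intro h; apply hane; linarith
  field_simp
  ring
end
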